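/- (Theorem 1 of the paper.) Let b, c ∈ ℝ and let F : ℝ³ → ℝ be a function such that (i) F(g₁, g₂, κ) = F(g₁, g₂, κ') for all g₁, g₂, κ, κ' ∈ ℝ (the statistical expectation of the estimator depends only on the reduced shears, since enlarging the intrinsic galaxies by the factor (1−κ) and setting κ ≠ 0 produces observed images identical to the κ = 0 case with the same reduced shears), and (ii) F(g₁, g₂, κ) − g₁·(1 + bκ + c(g₁² + g₂²)) = o(‖(g₁,g₂,κ)‖²) as (g₁,g₂,κ) → (0,0,0). Then b = 0. -/

import Mathlib

open Asymptotics Filter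

private lemma norm_eq_abs_aux (t : ℝ) (u : ℝ) (h : |u| ≤ |t|) :
    ‖((t, u, t) : ℝ × ℝ × ℝ)‖ = |t| := by
  simp [Prod.norm_def, Real.norm_eq_abs, max_eq_left, h, abs_nonneg]

/-- Theorem 1 of the paper: if the statistical expectation `F` of a spin-2 shear estimator
depends only on the reduced shears `(g₁, g₂)` (not on the convergence `κ`), and has the
second-order expansion `F(g₁,g₂,κ) = g₁(1 + bκ + c(g₁² + g₂²)) + o(‖(g₁,g₂,κ)‖²)`
(i.e. the method is free of calibration at first order, `a = 1`), then `b = 0`. -/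
theorem reduced_shear_theorem (b c : ℝ) (F : ℝ × ℝ × ℝ → ℝ)
    (hInd : ∀ g₁ g₂ κ κ' : ℝ, F (g₁, g₂, κ) = F (g₁, g₂, κ'))
    (hExp : (fun p : ℝ × ℝ × ℝ =>
          F p - p.1 * (1 + b * p.2.2 + c * (p.1 ^ 2 + p.2.1 ^ 2)))
        =o[nhds 0] fun p : ℝ × ℝ × ℝ => ‖p‖ ^ 2) :
    b = 0 := by
  -- map along t ↦ (t, 0, t)
  have ht1 : Filter.Tendsto (fun t : ℝ => ((t, 0, t) : ℝ × ℝ × ℝ)) (nhds 0) (nhds 0) := by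
    have : Continuous (fun t : ℝ => ((t, 0, t) : ℝ × ℝ × ℝ)) := by continuity
    simpa [Prod.mk_zero_zero] using this.tendsto 0
  have ht2 : Filter.Tendsto (fun t : ℝ => ((t, 0, 0) : ℝ × ℝ × ℝ)) (nhds 0) (nhds 0) := by
    have : Continuous (fun t : ℝ => ((t, 0, 0) : ℝ × ℝ × ℝ)) := by continuity
    simpa [Prod.mk_zero_zero] using this.tendsto 0
  have h1 := hExp.comp_tendsto ht1
  have h2 := hExp.comp_tendsto ht2
  have hn1 : ∀ t : ℝ, ‖((t, 0, t) : ℝ × ℝ × ℝ)‖ ^ 2 = t ^ 2 := by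
    intro t
    rw [norm_eq_abs_aux t 0 (by simp [abs_nonneg]), sq_abs]
  have hn2 : ∀ t : ℝ, ‖((t, 0, 0) : ℝ × ℝ × ℝ)‖ ^ 2 = t ^ 2 := by
    intro t
    simp [Prod.norm_def, Real.norm_eq_abs, max_eq_left, abs_nonneg, sq_abs]
  have h1' : (fun t : ℝ => F (t, 0, t) - t * (1 + b * t + c * (t ^ 2 + 0 ^ 2)))
      =o[nhds 0] fun t : ℝ => t ^ 2 := by
    refine h1.congr (fun t => rfl) hn1
  have h2' : (fun t : ℝ => F (t, 0, 0) - t * (1 + b * 0 + c * (t ^ 2 + 0 ^ 2)))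
      =o[nhds 0] fun t : ℝ => t ^ 2 := by
    refine h2.congr (fun t => rfl) hn2
  have h3 := h2'.sub h1'
  have h4 : (fun t : ℝ => b * t ^ 2) =o[nhds 0] fun t : ℝ => t ^ 2 := by
    refine h3.congr (fun t => ?_) (fun t => rfl)
    rw [hInd t 0 0 t]
    ring
  by_contra hb0
  have h5 : (fun t : ℝ => t ^ 2) =o[nhds 0] fun t : ℝ => t ^ 2 :=
    (isLittleO_const_mul_left_iff hb0).mp h4
  have h6 := h5.def (by norm_num : (0:ℝ) < 1/2)
  rw [Metric.eventually_nhds_iff] at h6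
  obtain ⟨δ, hδ, hδ'⟩ := h6
  have hd : dist (δ / 2) (0:ℝ) < δ := by
    rw [Real.dist_eq, sub_zero, abs_of_pos (by linarith)]
    linarith
  have h7 := hδ' hd
  rw [Real.norm_eq_abs, abs_of_nonneg (sq_nonneg _)] at h7
  nlinarith [hδ]
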